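/- Approximation of the finite-window local spectral averages (Lemma C.1). Fix K < ∞, κ > 3, 0 < λ_inf ≤ λ_sup < ∞ and N₀ ∈ ℕ. There exists a constant 𝒦 < ∞, depending only on K and κ, such that whenever Assumption LS(p, K, κ, λ_inf, λ_sup, N₀) holds: for all u ∈ ℝ, all N ∈ ℕ, all even M ∈ ℕ and all ω ∈ [0, 2π], ‖G_{u,M}(ω) − G^{(N)}_{u,M}(ω)‖₂ ≤ 𝒦 M/N and ‖G_u(ω) − G_{u,M}(ω)‖₂ ≤ 𝒦 (1/M + 1/M^{κ−1}). -/

import Mathlib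

noncomputable section

/-- `⟨x⟩ = max(1,|x|)` -/
def gu (x : ℝ) : ℝ := max 1 |x|

/-- `ζ(x) = max(1, log⟨x⟩)/⟨x⟩` -/
def zeta (x : ℝ) : ℝ := max 1 (Real.log (gu x)) / gu x

/-- spectral norm of a matrix -/
def specNorm {𝕜 : Type*} [RCLike 𝕜] {m n : Type*} [Fintype m] [Fintype n] [DecidableEq n]
    (M : Matrix m n 𝕜) : ℝ :=
  ‖LinearMap.toContinuousLinearMap (Matrix.toEuclideanLin M)‖

/-- `ℓ²(ι; ℝ^p)` -/
abbrev HpI (ι : Type) (p : ℕ) : Type := lp (fun _ : ι => EuclideanSpace ℝ (Fin p)) 2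

abbrev Hp (p : ℕ) : Type := HpI ℤ p

/-- the sequence `δ_t ⊗ e_a` -/
def bvec {ι : Type} [DecidableEq ι] (p : ℕ) (t : ι) (a : Fin p) : HpI ι p :=
  lp.single 2 t (EuclideanSpace.single a 1)

/-- the `p × p` block `A_{t,τ}` of an operator -/
def blk {ι : Type} [DecidableEq ι] {p : ℕ} (A : HpI ι p →L[ℝ] HpI ι p) (t τ : ι) :
    Matrix (Fin p) (Fin p) ℝ :=
  Matrix.of fun a b => inner (𝕜 := ℝ) (bvec p t a) (A (bvec p τ b))


/-- Assumption LS(p, K, κ, λ_inf, λ_sup, N₀): a locally stationary family of covariance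
operators `𝐂^(N)` together with the smooth local autocovariance functions `C_r(·)`. -/
structure AssumptionLS (p : ℕ) (K κ lamInf lamSup : ℝ) (N₀ : ℕ)
    (C : ℕ → Hp p →L[ℝ] Hp p) (Cr : ℤ → ℝ → Matrix (Fin p) (Fin p) ℝ) : Prop where
  symm : ∀ (N : ℕ) (x y : Hp p), inner (𝕜 := ℝ) ((C N) x) y = inner (𝕜 := ℝ) x ((C N) y)
  lower : ∀ N : ℕ, N₀ ≤ N → ∀ v : Hp p, lamInf * ‖v‖ ^ 2 ≤ inner (𝕜 := ℝ) v ((C N) v)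
  upper : ∀ N : ℕ, N₀ ≤ N → ∀ v : Hp p, inner (𝕜 := ℝ) v ((C N) v) ≤ lamSup * ‖v‖ ^ 2
  decay : ∀ N : ℕ, 1 ≤ N → ∀ t τ : ℤ,
    specNorm (blk (C N) t τ) ≤ K * gu ((t : ℝ) - (τ : ℝ)) ^ (-κ)
  crSymm : ∀ (r : ℤ) (u : ℝ), Cr r u = (Cr (-r) u).transpose
  crBound : ∀ (r : ℤ) (u : ℝ), specNorm (Cr r u) ≤ K * gu (r : ℝ) ^ (-κ)
  crLip : ∀ (r : ℤ) (u v : ℝ),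
    specNorm (Cr r u - Cr r v) ≤ K * |u - v| * gu (r : ℝ) ^ (-κ)
  approx : ∀ N : ℕ, 1 ≤ N → ∀ t τ : ℤ,
    specNorm (blk (C N) t τ - Cr (t - τ) ((t : ℝ) / (N : ℝ))) ≤
      K * gu ((t : ℝ) - (τ : ℝ)) ^ (-κ + 1) *
        min (1 / (N : ℝ)) (2 / gu ((t : ℝ) - (τ : ℝ)))

/-- the finite-window average `G^{(N)}_{u,M}(ω)` of the nonstationary covariance -/
def GfinN {p : ℕ} (C : Hp p →L[ℝ] Hp p) (u : ℝ) (N M : ℕ) (ω : ℝ) :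
    Matrix (Fin p) (Fin p) ℂ :=
  ((M : ℂ))⁻¹ •
    ∑ t ∈ Finset.Icc (⌊u * N⌋ - (M : ℤ) / 2 + 1) (⌊u * N⌋ + (M : ℤ) / 2),
      ∑ τ ∈ Finset.Icc (⌊u * N⌋ - (M : ℤ) / 2 + 1) (⌊u * N⌋ + (M : ℤ) / 2),
        Complex.exp (Complex.I * ((t : ℂ) - (τ : ℂ)) * (ω : ℂ)) •
          (blk C t τ).map Complex.ofReal

/-- the finite-window average `G_{u,M}(ω)` of the local autocovariances -/
def GfinU {p : ℕ} (Cr : ℤ → ℝ → Matrix (Fin p) (Fin p) ℝ) (u : ℝ) (N M : ℕ) (ω : ℝ) :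
    Matrix (Fin p) (Fin p) ℂ :=
  ((M : ℂ))⁻¹ •
    ∑ t ∈ Finset.Icc (⌊u * N⌋ - (M : ℤ) / 2 + 1) (⌊u * N⌋ + (M : ℤ) / 2),
      ∑ τ ∈ Finset.Icc (⌊u * N⌋ - (M : ℤ) / 2 + 1) (⌊u * N⌋ + (M : ℤ) / 2),
        Complex.exp (Complex.I * ((t : ℂ) - (τ : ℂ)) * (ω : ℂ)) •
          (Cr (t - τ) u).map Complex.ofReal

/-- the local spectral density `G_u(ω) = Σ_{r∈ℤ} C_r(u) e^{irω}` -/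
def Gfull {p : ℕ} (Cr : ℤ → ℝ → Matrix (Fin p) (Fin p) ℝ) (u : ℝ) (ω : ℝ) :
    Matrix (Fin p) (Fin p) ℂ :=
  ∑' r : ℤ, Complex.exp (Complex.I * (r : ℂ) * (ω : ℂ)) • (Cr r u).map Complex.ofReal


namespace LSAux

lemma one_le_gu (x : ℝ) : 1 ≤ gu x := le_max_left _ _
lemma gu_pos (x : ℝ) : 0 < gu x := lt_of_lt_of_le one_pos (one_le_gu x)
lemma gu_nonneg (x : ℝ) : 0 ≤ gu x := (gu_pos x).le
lemma abs_le_gu (x : ℝ) : |x| ≤ gu x := le_max_right _ _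

lemma gu_rpow_exp_le {s : ℝ} (hs : s ≤ -2) (x : ℝ) : gu x ^ s ≤ ((gu x) ^ 2)⁻¹ := by
  rw [← neg_neg s, Real.rpow_neg (gu_nonneg x)]
  have h2 : (gu x) ^ 2 ≤ gu x ^ (-s) := by
    rw [← Real.rpow_natCast (gu x) 2]
    exact Real.rpow_le_rpow_of_exponent_le (one_le_gu x) (by push_cast; linarith)
  exact inv_anti₀ (pow_pos (gu_pos x) 2) h2

lemma gu_rpow_le {κ : ℝ} (hκ : 2 ≤ κ) (x : ℝ) : gu x ^ (-κ) ≤ ((gu x) ^ 2)⁻¹ :=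
  gu_rpow_exp_le (by linarith) x

lemma gu_mul_rpow_le {κ : ℝ} (hκ : 3 ≤ κ) (x : ℝ) :
    gu x * gu x ^ (-κ) ≤ ((gu x) ^ 2)⁻¹ := by
  have h1 : gu x * gu x ^ (-κ) = gu x ^ (1 - κ) := by
    rw [Real.rpow_sub (gu_pos x), Real.rpow_one, Real.rpow_neg (gu_nonneg x), div_eq_mul_inv]
  rw [h1]
  exact gu_rpow_exp_le (by linarith) x

lemma gu_rpow_nonneg (x s : ℝ) : 0 ≤ gu x ^ s := Real.rpow_nonneg (gu_nonneg x) s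

lemma summable_gu_sq_inv : Summable (fun r : ℤ => (((gu r) ^ 2)⁻¹ : ℝ)) := by
  have h1 : Summable (fun r : ℤ => 1 / (r:ℝ)^2) := Real.summable_one_div_int_pow.mpr one_lt_two
  have h2 : Summable (fun r : ℤ => if r = 0 then (1:ℝ) else 0) := by
    apply summable_of_ne_finset_zero (s := {0})
    intro r hr
    simp only [Finset.mem_singleton] at hr
    simp [hr]
  refine (h1.add h2).congr fun r => ?_
  rcases eq_or_ne r 0 with rfl | hr
  · simp [gu]
  · have : gu (r:ℝ) = |(r:ℝ)| := by
      have : (1:ℝ) ≤ |(r:ℝ)| := by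
        rw [← Int.cast_abs]
        exact_mod_cast Int.one_le_abs hr
      simp [gu, max_eq_right this]
    rw [this]
    simp [sq_abs, hr, one_div]

def Sconst : ℝ := ∑' r : ℤ, (((gu r) ^ 2)⁻¹ : ℝ)

lemma gu_sq_inv_nonneg (x : ℝ) : (0:ℝ) ≤ ((gu x) ^ 2)⁻¹ := inv_nonneg.mpr (sq_nonneg _)

lemma Sconst_pos : 0 < Sconst := by
  have h := Summable.le_tsum summable_gu_sq_inv 0 (fun _ _ => gu_sq_inv_nonneg _)
  have h0 : ((gu ((0:ℤ):ℝ)) ^ 2)⁻¹ = 1 := by norm_num [gu]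
  rw [h0] at h
  exact lt_of_lt_of_le one_pos h

lemma summable_gu_shift (t : ℤ) : Summable (fun τ : ℤ => (((gu (t - τ)) ^ 2)⁻¹ : ℝ)) := by
  have := ((Equiv.subLeft t).summable_iff (f := fun r : ℤ => (((gu r) ^ 2)⁻¹ : ℝ))).mpr
    summable_gu_sq_inv
  simpa [Function.comp_def, Equiv.subLeft_apply, Int.cast_sub] using this

lemma sum_gu_shift_le (t : ℤ) (F : Finset ℤ) :
    ∑ τ ∈ F, (((gu (t - τ)) ^ 2)⁻¹ : ℝ) ≤ Sconst := by
  have h1 : ∑ τ ∈ F, (((gu (t - τ)) ^ 2)⁻¹ : ℝ) ≤ ∑' τ : ℤ, (((gu (t - τ)) ^ 2)⁻¹ : ℝ) :=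
    Summable.sum_le_tsum F (fun r _ => gu_sq_inv_nonneg _) (summable_gu_shift t)
  have h2 : ∑' τ : ℤ, (((gu (t - τ)) ^ 2)⁻¹ : ℝ) = Sconst := by
    have := (Equiv.subLeft t).tsum_eq (f := fun r : ℤ => (((gu r) ^ 2)⁻¹ : ℝ))
    simpa [Equiv.subLeft_apply, Int.cast_sub, Sconst] using this
  linarith

/-! ### spectral norm lemmas -/

section SpecNorm

variable {𝕜 : Type*} [RCLike 𝕜] {m n : Type*} [Fintype m] [Fintype n] [DecidableEq n]

lemma specNorm_nonneg (M : Matrix m n 𝕜) : 0 ≤ specNorm M := norm_nonneg _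

lemma specNorm_add_le (A B : Matrix m n 𝕜) : specNorm (A + B) ≤ specNorm A + specNorm B := by
  unfold specNorm
  rw [map_add, map_add]
  exact norm_add_le _ _

lemma specNorm_neg (A : Matrix m n 𝕜) : specNorm (-A) = specNorm A := by
  unfold specNorm; rw [map_neg, map_neg, norm_neg]

lemma specNorm_smul (c : 𝕜) (A : Matrix m n 𝕜) : specNorm (c • A) = ‖c‖ * specNorm A := by
  unfold specNorm
  rw [map_smul, map_smul]
  exact norm_smul c (LinearMap.toContinuousLinearMap (Matrix.toEuclideanLin A))

lemma specNorm_sum_le {ι : Type*} (s : Finset ι) (f : ι → Matrix m n 𝕜) :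
    specNorm (∑ i ∈ s, f i) ≤ ∑ i ∈ s, specNorm (f i) := by
  unfold specNorm
  rw [map_sum, map_sum]
  exact norm_sum_le _ _

lemma specNorm_sub_le (A B C : Matrix m n 𝕜) :
    specNorm (A - B) ≤ specNorm (A - C) + specNorm (C - B) := by
  have h : A - B = (A - C) + (C - B) := (sub_add_sub_cancel A C B).symm
  rw [h]; exact specNorm_add_le _ _

lemma abs_entry_le_specNorm [DecidableEq m] (M : Matrix m n 𝕜) (a : m) (b : n) :
    ‖M a b‖ ≤ specNorm M := by
  have h1 : M a b = (Matrix.toEuclideanLin M (EuclideanSpace.single b 1)) a := by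
    rw [Matrix.toEuclideanLin_apply]
    simp
  have h2 : ‖(Matrix.toEuclideanLin M (EuclideanSpace.single b 1))‖ ≤ specNorm M := by
    have := (LinearMap.toContinuousLinearMap (Matrix.toEuclideanLin M)).le_opNorm
      (EuclideanSpace.single b 1)
    simpa [EuclideanSpace.norm_single, specNorm] using this
  calc ‖M a b‖ = ‖inner (𝕜 := 𝕜) (EuclideanSpace.single a (1:𝕜))
        (Matrix.toEuclideanLin M (EuclideanSpace.single b 1))‖ := by
        rw [EuclideanSpace.inner_single_left]; simp [← h1]
    _ ≤ ‖EuclideanSpace.single a (1:𝕜)‖ * ‖(Matrix.toEuclideanLin M (EuclideanSpace.single b 1))‖ :=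
        norm_inner_le_norm _ _
    _ ≤ specNorm M := by simpa [EuclideanSpace.norm_single] using h2

lemma toEuclideanLin_apply' (M : Matrix m n 𝕜) (v : EuclideanSpace 𝕜 n)
    (i : m) : Matrix.toEuclideanLin M v i = ∑ j, M i j * v j := by
  rw [Matrix.toEuclideanLin_apply]
  rfl

omit [Fintype m] [DecidableEq n] in
lemma euclid_norm_sq {ι : Type*} [Fintype ι] (v : EuclideanSpace 𝕜 ι) :
    ‖v‖ ^ 2 = ∑ j, ‖v j‖ ^ 2 := by
  rw [EuclideanSpace.norm_eq, Real.sq_sqrt]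
  positivity

lemma specNorm_apply_le (M : Matrix m n 𝕜) (v : EuclideanSpace 𝕜 n) :
    ‖Matrix.toEuclideanLin M v‖ ≤ specNorm M * ‖v‖ := by
  have := (LinearMap.toContinuousLinearMap (Matrix.toEuclideanLin M)).le_opNorm v
  simpa [specNorm] using this

lemma specNorm_map_ofReal_le (A : Matrix m n ℝ) :
    specNorm (A.map Complex.ofReal) ≤ specNorm A := by
  apply ContinuousLinearMap.opNorm_le_bound _ (norm_nonneg _)
  intro v
  simp only [LinearMap.coe_toContinuousLinearMap']
  set x : EuclideanSpace ℝ n := WithLp.toLp 2 (fun j => (v j).re) with hx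
  set y : EuclideanSpace ℝ n := WithLp.toLp 2 (fun j => (v j).im) with hy
  have key : ∀ i, ‖Matrix.toEuclideanLin (A.map Complex.ofReal) v i‖ ^ 2
      = ‖Matrix.toEuclideanLin A x i‖ ^ 2 + ‖Matrix.toEuclideanLin A y i‖ ^ 2 := by
    intro i
    rw [toEuclideanLin_apply', toEuclideanLin_apply', toEuclideanLin_apply']
    have hre : (∑ j, (A.map Complex.ofReal) i j * v j).re = ∑ j, A i j * x j := by
      rw [Complex.re_sum]
      refine Finset.sum_congr rfl fun j _ => ?_
      simp [Matrix.map_apply, Complex.mul_re, hx]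
    have him : (∑ j, (A.map Complex.ofReal) i j * v j).im = ∑ j, A i j * y j := by
      rw [Complex.im_sum]
      refine Finset.sum_congr rfl fun j _ => ?_
      simp [Matrix.map_apply, Complex.mul_im, hy]
    rw [Complex.sq_norm, Complex.normSq_apply, hre, him]
    simp [Real.norm_eq_abs, sq_abs]
    ring
  have hvsq : ‖v‖ ^ 2 = ‖x‖ ^ 2 + ‖y‖ ^ 2 := by
    rw [euclid_norm_sq, euclid_norm_sq, euclid_norm_sq, ← Finset.sum_add_distrib]
    refine Finset.sum_congr rfl fun j _ => ?_
    rw [Complex.sq_norm, Complex.normSq_apply]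
    simp [Real.norm_eq_abs, sq_abs, hx, hy]
    ring
  have hx1 : ‖Matrix.toEuclideanLin A x‖ ≤ specNorm A * ‖x‖ := specNorm_apply_le A x
  have hy1 : ‖Matrix.toEuclideanLin A y‖ ≤ specNorm A * ‖y‖ := specNorm_apply_le A y
  have hsq : ‖Matrix.toEuclideanLin (A.map Complex.ofReal) v‖ ^ 2 ≤ (specNorm A * ‖v‖) ^ 2 := by
    rw [euclid_norm_sq]
    have e1 : ∑ i, ‖Matrix.toEuclideanLin (A.map Complex.ofReal) v i‖ ^ 2
        = ‖Matrix.toEuclideanLin A x‖ ^ 2 + ‖Matrix.toEuclideanLin A y‖ ^ 2 := by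
      rw [euclid_norm_sq (Matrix.toEuclideanLin A x), euclid_norm_sq (Matrix.toEuclideanLin A y),
        ← Finset.sum_add_distrib]
      exact Finset.sum_congr rfl fun i _ => key i
    rw [e1]
    have h2 : ‖Matrix.toEuclideanLin A x‖ ^ 2 + ‖Matrix.toEuclideanLin A y‖ ^ 2
        ≤ (specNorm A * ‖x‖) ^ 2 + (specNorm A * ‖y‖) ^ 2 := by
      exact add_le_add (pow_le_pow_left₀ (norm_nonneg _) hx1 2)
        (pow_le_pow_left₀ (norm_nonneg _) hy1 2)
    refine h2.trans (le_of_eq ?_)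
    rw [mul_pow, mul_pow, mul_pow, ← mul_add, hvsq]
  have hnn : (0:ℝ) ≤ specNorm A * ‖v‖ := mul_nonneg (norm_nonneg _) (norm_nonneg _)
  exact le_of_pow_le_pow_left₀ two_ne_zero hnn hsq

end SpecNorm

lemma map_ofReal_sub {p : ℕ} (A B : Matrix (Fin p) (Fin p) ℝ) :
    (A.map Complex.ofReal) - (B.map Complex.ofReal) = (A - B).map Complex.ofReal := by
  ext i j
  simp [Matrix.map_apply, Matrix.sub_apply]

lemma norm_exp_I_mul_ofReal (x y : ℝ) : ‖Complex.exp (Complex.I * (x:ℂ) * (y:ℂ))‖ = 1 := by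
  rw [Complex.norm_exp]
  have : (Complex.I * (x:ℂ) * (y:ℂ)).re = 0 := by
    simp [Complex.mul_re, Complex.mul_im]
  rw [this, Real.exp_zero]

lemma specNorm_continuous {p : ℕ} :
    Continuous (fun M : Matrix (Fin p) (Fin p) ℂ => specNorm M) := by
  have hL : Continuous (fun M : Matrix (Fin p) (Fin p) ℂ =>
      (LinearMap.toContinuousLinearMap (Matrix.toEuclideanLin M))) := by
    exact LinearMap.continuous_of_finiteDimensional
      ((LinearMap.toContinuousLinearMap.toLinearMap.comp
        Matrix.toEuclideanLin.toLinearMap) :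
        Matrix (Fin p) (Fin p) ℂ →ₗ[ℂ] (EuclideanSpace ℂ (Fin p) →L[ℂ] EuclideanSpace ℂ (Fin p)))
  exact continuous_norm.comp hL

lemma matrix_summable {p : ℕ} {g : ℤ → Matrix (Fin p) (Fin p) ℂ}
    (h : ∀ a b : Fin p, Summable fun r => g r a b) : Summable g :=
  Pi.summable.mpr fun a => Pi.summable.mpr fun b => h a b

lemma specNorm_hasSum_le {p : ℕ} {g : ℤ → Matrix (Fin p) (Fin p) ℂ}
    {L : Matrix (Fin p) (Fin p) ℂ} (hg : HasSum g L) {b : ℤ → ℝ} (hb : Summable b)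
    (hgb : ∀ r, specNorm (g r) ≤ b r) : specNorm L ≤ ∑' r, b r := by
  have h1 : Filter.Tendsto (fun F : Finset ℤ => specNorm (∑ r ∈ F, g r)) Filter.atTop
      (nhds (specNorm L)) := (specNorm_continuous.tendsto L).comp hg
  refine le_of_tendsto h1 (Filter.Eventually.of_forall fun F => ?_)
  calc specNorm (∑ r ∈ F, g r) ≤ ∑ r ∈ F, specNorm (g r) := specNorm_sum_le _ _
    _ ≤ ∑ r ∈ F, b r := Finset.sum_le_sum fun r _ => hgb r
    _ ≤ ∑' r, b r := Summable.sum_le_tsum F (fun r _ => le_trans (specNorm_nonneg _) (hgb r)) hb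

lemma window_identity {α : Type*} [AddCommMonoid α] (f : ℤ → α) (A B : ℤ) :
    ∑ t ∈ Finset.Icc A B, ∑ τ ∈ Finset.Icc A B, f (t - τ)
      = ∑ r ∈ Finset.Icc (A - B) (B - A), ((B - A + 1 - |r|).toNat) • f r := by
  have step1 : ∀ t : ℤ, ∑ τ ∈ Finset.Icc A B, f (t - τ)
      = ∑ r ∈ Finset.Icc (t - B) (t - A), f r := by
    intro t
    refine Finset.sum_bij' (fun τ _ => t - τ) (fun r _ => t - r) ?_ ?_ ?_ ?_ ?_
    · intro τ hτ; simp only [Finset.mem_Icc] at hτ ⊢; omega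
    · intro r hr; simp only [Finset.mem_Icc] at hr ⊢; omega
    · intro τ _; omega
    · intro r _; omega
    · intro τ _; rfl
  calc ∑ t ∈ Finset.Icc A B, ∑ τ ∈ Finset.Icc A B, f (t - τ)
      = ∑ t ∈ Finset.Icc A B, ∑ r ∈ Finset.Icc (A - B) (B - A),
          (if r ∈ Finset.Icc (t - B) (t - A) then f r else 0) := by
        refine Finset.sum_congr rfl fun t ht => ?_
        rw [step1 t, Finset.sum_ite_mem]
        congr 1
        refine (Finset.inter_eq_right.mpr ?_).symm
        intro r hr
        simp only [Finset.mem_Icc] at ht hr ⊢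
        omega
    _ = ∑ r ∈ Finset.Icc (A - B) (B - A), ∑ t ∈ Finset.Icc A B,
          (if r ∈ Finset.Icc (t - B) (t - A) then f r else 0) := Finset.sum_comm
    _ = ∑ r ∈ Finset.Icc (A - B) (B - A), ((B - A + 1 - |r|).toNat) • f r := by
        refine Finset.sum_congr rfl fun r hr => ?_
        have hcond : ∀ t : ℤ, (if r ∈ Finset.Icc (t - B) (t - A) then f r else 0)
            = (if t ∈ Finset.Icc (A + r) (B + r) then f r else 0) := by
          intro t
          refine if_congr ?_ rfl rfl
          simp only [Finset.mem_Icc]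
          omega
        rw [Finset.sum_congr rfl fun t _ => hcond t, Finset.sum_ite_mem, Finset.sum_const]
        have hint : Finset.Icc A B ∩ Finset.Icc (A + r) (B + r)
            = Finset.Icc (max A (A + r)) (min B (B + r)) := by
          ext x
          simp only [Finset.mem_inter, Finset.mem_Icc, le_min_iff, max_le_iff]
          omega
        congr 1
        rw [hint, Int.card_Icc]
        simp only [Finset.mem_Icc] at hr
        rcases abs_cases r with ⟨h1, h2⟩ | ⟨h1, h2⟩ <;> rw [h1] <;> omega

end LSAux

open LSAux

set_option maxHeartbeats 1600000 in
/-- Lemma C.1: approximation of the finite-window local spectral averages. -/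
theorem local_spectral_average_approximation (K κ lamInf lamSup : ℝ) (N₀ : ℕ)
    (hκ : 3 < κ) (hInf : 0 < lamInf) (hle : lamInf ≤ lamSup) :
    ∃ 𝒦 : ℝ, 0 < 𝒦 ∧
      ∀ (p : ℕ), 1 ≤ p →
        ∀ (C : ℕ → Hp p →L[ℝ] Hp p) (Cr : ℤ → ℝ → Matrix (Fin p) (Fin p) ℝ),
          AssumptionLS p K κ lamInf lamSup N₀ C Cr →
          ∀ (u : ℝ) (N : ℕ), 1 ≤ N → ∀ M : ℕ, Even M → 2 ≤ M →
            ∀ ω ∈ Set.Icc (0 : ℝ) (2 * Real.pi),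
              specNorm (GfinU Cr u N M ω - GfinN (C N) u N M ω) ≤
                𝒦 * (M : ℝ) / (N : ℝ) ∧
              specNorm (Gfull Cr u ω - GfinU Cr u N M ω) ≤
                𝒦 * (1 / (M : ℝ) + 1 / (M : ℝ) ^ (κ - 1)) := by
  have hSpos := LSAux.Sconst_pos
  refine ⟨(|K| + 1) * (Sconst + 1) * 4, by positivity, ?_⟩
  intro p hp C Cr hLS u N hN M hMeven hM2 ω hω
  have hK : 0 ≤ K := by
    have h := hLS.crBound 0 u
    have h0 : (0:ℝ) ≤ specNorm (Cr 0 u) := specNorm_nonneg _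
    have hgu0 : gu ((0:ℤ):ℝ) = 1 := by norm_num [gu]
    rw [hgu0, Real.one_rpow, mul_one] at h
    linarith
  have hNR : (0:ℝ) < N := by exact_mod_cast hN
  have hM0 : 0 < M := by omega
  have hMR : (0:ℝ) < M := by exact_mod_cast hM0
  obtain ⟨k, hk⟩ := hMeven
  have hkZ : (M:ℤ) = k + k := by exact_mod_cast hk
  set T : ℤ := ⌊u * (N:ℝ)⌋ with hT
  set q : ℤ := (M:ℤ) / 2 with hq
  have h2q : 2 * q = (M:ℤ) := by omega
  set A : ℤ := T - q + 1 with hA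
  set B : ℤ := T + q with hB
  have hBA : B - A = (M:ℤ) - 1 := by omega
  have hcard : (Finset.Icc A B).card = M := by rw [Int.card_Icc]; omega
  set F : ℤ → Matrix (Fin p) (Fin p) ℂ :=
    fun r => Complex.exp (Complex.I * (r:ℂ) * (ω:ℂ)) • (Cr r u).map Complex.ofReal with hF
  have hFnorm : ∀ r : ℤ, specNorm (F r) ≤ K * gu (r:ℝ) ^ (-κ) := by
    intro r
    rw [hF]
    simp only
    rw [specNorm_smul]
    have he : ‖Complex.exp (Complex.I * (r:ℂ) * (ω:ℂ))‖ = 1 := by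
      have hc : ((r:ℤ):ℂ) = (((r:ℝ)):ℂ) := by push_cast; ring
      rw [hc]; exact norm_exp_I_mul_ofReal _ _
    rw [he, one_mul]
    exact le_trans (specNorm_map_ofReal_le _) (hLS.crBound r u)
  constructor
  · -- Part 1
    have key1 : ∀ t ∈ Finset.Icc A B, ∀ τ ∈ Finset.Icc A B,
        specNorm (Cr (t - τ) u - blk (C N) t τ)
          ≤ (2*K*(M:ℝ)/(N:ℝ)) * ((gu ((t:ℝ) - (τ:ℝ)))^2)⁻¹ := by
      intro t ht τ hτ
      simp only [Finset.mem_Icc] at ht hτ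
      have hT1 : ((T:ℤ):ℝ) ≤ u * N := Int.floor_le _
      have hT2 : u * (N:ℝ) < ((T:ℤ):ℝ) + 1 := Int.lt_floor_add_one _
      have ht1R : ((T:ℝ) - (q:ℝ) + 1) ≤ (t:ℝ) := by
        have h := ht.1; rw [hA] at h; exact_mod_cast h
      have ht2R : (t:ℝ) ≤ (T:ℝ) + (q:ℝ) := by
        have h := ht.2; rw [hB] at h; exact_mod_cast h
      have hqM : (q:ℝ) ≤ (M:ℝ) := by exact_mod_cast (by omega : q ≤ (M:ℤ))
      have habs : |u - (t:ℝ)/(N:ℝ)| ≤ (M:ℝ)/(N:ℝ) := by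
        have hdiv : u - (t:ℝ)/(N:ℝ) = (u * N - t)/N := by field_simp
        rw [hdiv, abs_div, abs_of_pos hNR]
        have h1 : |u * (N:ℝ) - t| ≤ (M:ℝ) := by
          rw [abs_le]
          constructor <;> linarith
        gcongr
      have hb1 := hLS.crLip (t - τ) u ((t:ℝ)/(N:ℝ))
      push_cast at hb1
      have hb2 := hLS.approx N hN t τ
      have hXnn : (0:ℝ) ≤ ((gu ((t:ℝ)-(τ:ℝ)))^2)⁻¹ := gu_sq_inv_nonneg _
      have e1 : specNorm (Cr (t-τ) u - Cr (t-τ) ((t:ℝ)/(N:ℝ)))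
          ≤ K * ((M:ℝ)/(N:ℝ)) * ((gu ((t:ℝ)-(τ:ℝ)))^2)⁻¹ := by
        refine le_trans hb1 ?_
        have hg2 := gu_rpow_le (by linarith : (2:ℝ) ≤ κ) ((t:ℝ)-(τ:ℝ))
        calc K * |u - (t:ℝ)/(N:ℝ)| * gu ((t:ℝ)-(τ:ℝ)) ^ (-κ)
            ≤ K * ((M:ℝ)/(N:ℝ)) * gu ((t:ℝ)-(τ:ℝ)) ^ (-κ) := by
              exact mul_le_mul_of_nonneg_right (mul_le_mul_of_nonneg_left habs hK)
                (gu_rpow_nonneg _ _)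
          _ ≤ K * ((M:ℝ)/(N:ℝ)) * ((gu ((t:ℝ)-(τ:ℝ)))^2)⁻¹ := by
              refine mul_le_mul_of_nonneg_left hg2 ?_
              have : (0:ℝ) ≤ (M:ℝ)/(N:ℝ) := by positivity
              exact mul_nonneg hK this
      have e2 : specNorm (Cr (t-τ) ((t:ℝ)/(N:ℝ)) - blk (C N) t τ)
          ≤ K * (1/(N:ℝ)) * ((gu ((t:ℝ)-(τ:ℝ)))^2)⁻¹ := by
        rw [← specNorm_neg, neg_sub]
        refine le_trans hb2 ?_
        have hmin : min (1/(N:ℝ)) (2/gu ((t:ℝ)-(τ:ℝ))) ≤ 1/(N:ℝ) := min_le_left _ _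
        have hg3 : gu ((t:ℝ)-(τ:ℝ)) ^ (-κ+1) ≤ ((gu ((t:ℝ)-(τ:ℝ)))^2)⁻¹ :=
          gu_rpow_exp_le (by linarith) _
        calc K * gu ((t:ℝ)-(τ:ℝ)) ^ (-κ+1) * min (1/(N:ℝ)) (2/gu ((t:ℝ)-(τ:ℝ)))
            ≤ K * gu ((t:ℝ)-(τ:ℝ)) ^ (-κ+1) * (1/(N:ℝ)) := by
              exact mul_le_mul_of_nonneg_left hmin (mul_nonneg hK (gu_rpow_nonneg _ _))
          _ = K * (1/(N:ℝ)) * gu ((t:ℝ)-(τ:ℝ)) ^ (-κ+1) := by ring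
          _ ≤ K * (1/(N:ℝ)) * ((gu ((t:ℝ)-(τ:ℝ)))^2)⁻¹ := by
              refine mul_le_mul_of_nonneg_left hg3 ?_
              have : (0:ℝ) ≤ 1/(N:ℝ) := by positivity
              exact mul_nonneg hK this
      have htri := specNorm_sub_le (Cr (t-τ) u) (blk (C N) t τ) (Cr (t-τ) ((t:ℝ)/(N:ℝ)))
      have hM1 : (1:ℝ) ≤ (M:ℝ) := by exact_mod_cast hM0
      have hsum2 : K * ((M:ℝ)/(N:ℝ)) * ((gu ((t:ℝ)-(τ:ℝ)))^2)⁻¹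
            + K * (1/(N:ℝ)) * ((gu ((t:ℝ)-(τ:ℝ)))^2)⁻¹
          ≤ (2*K*(M:ℝ)/(N:ℝ)) * ((gu ((t:ℝ)-(τ:ℝ)))^2)⁻¹ := by
        have hc : K * ((M:ℝ)/(N:ℝ)) + K * (1/(N:ℝ)) ≤ 2*K*(M:ℝ)/(N:ℝ) := by
          have h2 : K*((M:ℝ)+1) ≤ 2*K*(M:ℝ) := by nlinarith
          calc K * ((M:ℝ)/(N:ℝ)) + K * (1/(N:ℝ)) = (K*((M:ℝ)+1))/(N:ℝ) := by ring
            _ ≤ (2*K*(M:ℝ))/(N:ℝ) := div_le_div_of_nonneg_right h2 hNR.le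
            _ = 2*K*(M:ℝ)/(N:ℝ) := by ring
        calc K * ((M:ℝ)/(N:ℝ)) * ((gu ((t:ℝ)-(τ:ℝ)))^2)⁻¹
              + K * (1/(N:ℝ)) * ((gu ((t:ℝ)-(τ:ℝ)))^2)⁻¹
            = (K * ((M:ℝ)/(N:ℝ)) + K * (1/(N:ℝ))) * ((gu ((t:ℝ)-(τ:ℝ)))^2)⁻¹ := by ring
          _ ≤ (2*K*(M:ℝ)/(N:ℝ)) * ((gu ((t:ℝ)-(τ:ℝ)))^2)⁻¹ :=
              mul_le_mul_of_nonneg_right hc hXnn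
      exact le_trans htri (le_trans (add_le_add e1 e2) hsum2)
    have hsplit : GfinU Cr u N M ω - GfinN (C N) u N M ω
        = (M:ℂ)⁻¹ • ∑ t ∈ Finset.Icc A B, ∑ τ ∈ Finset.Icc A B,
            Complex.exp (Complex.I * ((t:ℂ) - (τ:ℂ)) * (ω:ℂ)) •
              ((Cr (t - τ) u - blk (C N) t τ).map Complex.ofReal) := by
      unfold GfinU GfinN
      rw [← hT, ← hq, ← hA, ← hB]
      rw [← smul_sub, ← Finset.sum_sub_distrib]
      congr 1
      refine Finset.sum_congr rfl fun t _ => ?_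
      rw [← Finset.sum_sub_distrib]
      refine Finset.sum_congr rfl fun τ _ => ?_
      rw [← smul_sub, map_ofReal_sub]
    rw [hsplit, specNorm_smul]
    have hnormM : ‖((M:ℕ):ℂ)⁻¹‖ = ((M:ℕ):ℝ)⁻¹ := by
      rw [norm_inv, Complex.norm_natCast]
    rw [hnormM]
    have hsum : specNorm (∑ t ∈ Finset.Icc A B, ∑ τ ∈ Finset.Icc A B,
          Complex.exp (Complex.I * ((t:ℂ) - (τ:ℂ)) * (ω:ℂ)) •
            ((Cr (t - τ) u - blk (C N) t τ).map Complex.ofReal))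
        ≤ (M:ℝ) * ((2*K*(M:ℝ)/(N:ℝ)) * Sconst) := by
      refine le_trans (specNorm_sum_le _ _) ?_
      have hrow : ∀ t ∈ Finset.Icc A B,
          specNorm (∑ τ ∈ Finset.Icc A B,
            Complex.exp (Complex.I * ((t:ℂ) - (τ:ℂ)) * (ω:ℂ)) •
              ((Cr (t - τ) u - blk (C N) t τ).map Complex.ofReal))
          ≤ (2*K*(M:ℝ)/(N:ℝ)) * Sconst := by
        intro t ht
        refine le_trans (specNorm_sum_le _ _) ?_
        have hterm : ∀ τ ∈ Finset.Icc A B,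
            specNorm (Complex.exp (Complex.I * ((t:ℂ) - (τ:ℂ)) * (ω:ℂ)) •
              ((Cr (t - τ) u - blk (C N) t τ).map Complex.ofReal))
            ≤ (2*K*(M:ℝ)/(N:ℝ)) * ((gu ((t:ℝ) - (τ:ℝ)))^2)⁻¹ := by
          intro τ hτ
          rw [specNorm_smul]
          have he : ‖Complex.exp (Complex.I * ((t:ℂ)-(τ:ℂ)) * (ω:ℂ))‖ = 1 := by
            have hc : ((t:ℂ) - (τ:ℂ)) = ((((t:ℝ) - (τ:ℝ)) : ℝ) : ℂ) := by push_cast; ring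
            rw [hc]; exact norm_exp_I_mul_ofReal _ _
          rw [he, one_mul]
          exact le_trans (specNorm_map_ofReal_le _) (key1 t ht τ hτ)
        refine le_trans (Finset.sum_le_sum hterm) ?_
        rw [← Finset.mul_sum]
        have hcnn : (0:ℝ) ≤ 2*K*(M:ℝ)/(N:ℝ) := by
          apply div_nonneg ?_ hNR.le
          have := hMR.le
          nlinarith
        refine mul_le_mul_of_nonneg_left ?_ hcnn
        exact sum_gu_shift_le t _
      refine le_trans (Finset.sum_le_sum hrow) ?_
      rw [Finset.sum_const, hcard, nsmul_eq_mul]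
    have hKS : 2*K*Sconst ≤ (|K| + 1) * (Sconst + 1) * 4 := by
      nlinarith [le_abs_self K, abs_nonneg K, hSpos.le]
    calc ((M:ℕ):ℝ)⁻¹ * specNorm (∑ t ∈ Finset.Icc A B, ∑ τ ∈ Finset.Icc A B,
          Complex.exp (Complex.I * ((t:ℂ) - (τ:ℂ)) * (ω:ℂ)) •
            ((Cr (t - τ) u - blk (C N) t τ).map Complex.ofReal))
        ≤ ((M:ℕ):ℝ)⁻¹ * ((M:ℝ) * ((2*K*(M:ℝ)/(N:ℝ)) * Sconst)) := by
          exact mul_le_mul_of_nonneg_left hsum (by positivity)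
      _ = (2*K*Sconst) * (M:ℝ) / (N:ℝ) := by
          field_simp
      _ ≤ ((|K| + 1) * (Sconst + 1) * 4) * (M:ℝ) / (N:ℝ) := by
          apply div_le_div_of_nonneg_right ?_ hNR.le
          exact mul_le_mul_of_nonneg_right hKS hMR.le
  · -- Part 2
    set J : Finset ℤ := Finset.Icc (A - B) (B - A) with hJ
    have hFsummable : Summable F := by
      refine matrix_summable fun a b => ?_
      refine Summable.of_norm_bounded
        (summable_gu_sq_inv.mul_left K) ?_
      intro r
      calc ‖F r a b‖ ≤ specNorm (F r) := abs_entry_le_specNorm _ a b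
        _ ≤ K * gu (r:ℝ)^(-κ) := hFnorm r
        _ ≤ K * ((gu (r:ℝ))^2)⁻¹ :=
            mul_le_mul_of_nonneg_left (gu_rpow_le (by linarith) _) hK
    have hGeq : Gfull Cr u ω = ∑' r, F r := by
      unfold Gfull
      rw [hF]
    have hGfull : HasSum F (Gfull Cr u ω) := by
      rw [hGeq]; exact hFsummable.hasSum
    have hGfinU : GfinU Cr u N M ω
        = (M:ℂ)⁻¹ • ∑ r ∈ J, ((B - A + 1 - |r|).toNat) • F r := by
      unfold GfinU
      rw [← hT, ← hq, ← hA, ← hB]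
      congr 1
      rw [hJ, ← window_identity F A B]
      refine Finset.sum_congr rfl fun t _ => Finset.sum_congr rfl fun τ _ => ?_
      rw [hF]
      simp only
      rw [Int.cast_sub]
    set h : ℤ → Matrix (Fin p) (Fin p) ℂ :=
      fun r => if r ∈ J then ((M:ℂ)⁻¹ * (((B - A + 1 - |r|).toNat : ℕ) : ℂ)) • F r else 0 with hh
    have hhzero : ∀ r ∉ J, h r = 0 := by
      intro r hr
      rw [hh]
      simp only
      rw [if_neg hr]
    have hhsummable : Summable h := summable_of_ne_finset_zero hhzero
    have hhsum : ∑' r, h r = GfinU Cr u N M ω := by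
      rw [tsum_eq_sum hhzero, hGfinU, Finset.smul_sum]
      refine Finset.sum_congr rfl fun r hr => ?_
      rw [hh]
      simp only
      rw [if_pos hr, mul_smul, Nat.cast_smul_eq_nsmul]
    have hgHasSum : HasSum (fun r => F r - h r)
        (Gfull Cr u ω - GfinU Cr u N M ω) := by
      have h2 : HasSum h (GfinU Cr u N M ω) := hhsum ▸ hhsummable.hasSum
      exact hGfull.sub h2
    have hMC0 : ((M:ℕ):ℂ) ≠ 0 := Nat.cast_ne_zero.mpr (by omega)
    have hMne : ((M:ℕ):ℝ) ≠ 0 := ne_of_gt hMR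
    have hbound : ∀ r : ℤ, specNorm (F r - h r)
        ≤ (K * (M:ℝ)⁻¹) * ((gu (r:ℝ))^2)⁻¹ := by
      intro r
      have hKM : (0:ℝ) ≤ K * (M:ℝ)⁻¹ := mul_nonneg hK (by positivity)
      by_cases hr : r ∈ J
      · have hrJ : |r| ≤ (M:ℤ) - 1 := by
          rw [hJ] at hr
          simp only [Finset.mem_Icc] at hr
          rcases abs_cases r with ⟨h1,h2⟩|⟨h1,h2⟩ <;> omega
        have h1 : B - A + 1 - |r| = (M:ℤ) - |r| := by omega
        have h3 : (0:ℤ) ≤ (M:ℤ) - |r| := by omega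
        have hnR : (((B - A + 1 - |r|).toNat : ℕ) : ℝ) = (M:ℝ) - |(r:ℝ)| := by
          rw [h1, ← Int.cast_natCast, Int.toNat_of_nonneg h3]
          push_cast
          ring
        rw [hh]
        simp only
        rw [if_pos hr]
        have hfactor : F r - ((M:ℂ)⁻¹ * (((B - A + 1 - |r|).toNat : ℕ):ℂ)) • F r
            = ((1:ℂ) - (M:ℂ)⁻¹ * (((B - A + 1 - |r|).toNat : ℕ):ℂ)) • F r := by
          rw [sub_smul, one_smul]
        rw [hfactor, specNorm_smul]
        have hscal : ‖(1:ℂ) - (M:ℂ)⁻¹ * (((B - A + 1 - |r|).toNat : ℕ):ℂ)‖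
            = |(r:ℝ)| / (M:ℝ) := by
          rw [← Complex.ofReal_natCast ((B - A + 1 - |r|).toNat), hnR,
            ← Complex.ofReal_natCast M,
            ← Complex.ofReal_inv, ← Complex.ofReal_mul, ← Complex.ofReal_one,
            ← Complex.ofReal_sub, Complex.norm_real]
          have harith : 1 - ((M:ℝ))⁻¹ * ((M:ℝ) - |(r:ℝ)|) = |(r:ℝ)|/(M:ℝ) := by
            field_simp
            ring
          rw [harith]
          exact abs_of_nonneg (by positivity)
        rw [hscal]
        calc |(r:ℝ)|/(M:ℝ) * specNorm (F r)
            ≤ |(r:ℝ)|/(M:ℝ) * (K * gu (r:ℝ)^(-κ)) :=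
              mul_le_mul_of_nonneg_left (hFnorm r) (by positivity)
          _ ≤ gu (r:ℝ)/(M:ℝ) * (K * gu (r:ℝ)^(-κ)) := by
              refine mul_le_mul_of_nonneg_right ?_
                (mul_nonneg hK (gu_rpow_nonneg _ _))
              exact div_le_div_of_nonneg_right (abs_le_gu _) hMR.le
          _ = (K * (M:ℝ)⁻¹) * (gu (r:ℝ) * gu (r:ℝ)^(-κ)) := by ring
          _ ≤ (K * (M:ℝ)⁻¹) * ((gu (r:ℝ))^2)⁻¹ :=
              mul_le_mul_of_nonneg_left (gu_mul_rpow_le (le_of_lt hκ) _) hKM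
      · rw [hh]
        simp only
        rw [if_neg hr, sub_zero]
        have hrM : (M:ℝ) ≤ gu (r:ℝ) := by
          have hMabs : (M:ℤ) ≤ |r| := by
            rw [hJ] at hr
            simp only [Finset.mem_Icc, not_and_or, not_le] at hr
            rcases abs_cases r with ⟨h1,h2⟩|⟨h1,h2⟩ <;> omega
          calc (M:ℝ) ≤ |(r:ℝ)| := by
                rw [← Int.cast_abs]
                exact_mod_cast hMabs
            _ ≤ gu (r:ℝ) := abs_le_gu _
        calc specNorm (F r) ≤ K * gu (r:ℝ)^(-κ) := hFnorm r
          _ = (K * (M:ℝ)⁻¹) * ((M:ℝ) * gu (r:ℝ)^(-κ)) := by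
              field_simp
          _ ≤ (K * (M:ℝ)⁻¹) * (gu (r:ℝ) * gu (r:ℝ)^(-κ)) := by
              refine mul_le_mul_of_nonneg_left ?_ hKM
              exact mul_le_mul_of_nonneg_right hrM (gu_rpow_nonneg _ _)
          _ ≤ (K * (M:ℝ)⁻¹) * ((gu (r:ℝ))^2)⁻¹ :=
              mul_le_mul_of_nonneg_left (gu_mul_rpow_le (le_of_lt hκ) _) hKM
    have hfinal := specNorm_hasSum_le hgHasSum
      (summable_gu_sq_inv.mul_left (K * (M:ℝ)⁻¹)) hbound
    rw [tsum_mul_left] at hfinal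
    have hSdef : (∑' r : ℤ, (((gu r) ^ 2)⁻¹ : ℝ)) = Sconst := rfl
    rw [hSdef] at hfinal
    have hrpow : 0 < 1 / (M:ℝ) ^ (κ - 1) := by positivity
    have hKpos : (0:ℝ) < (|K| + 1) * (Sconst + 1) * 4 := by positivity
    calc specNorm (Gfull Cr u ω - GfinU Cr u N M ω)
        ≤ K * (M:ℝ)⁻¹ * Sconst := hfinal
      _ ≤ ((|K| + 1) * (Sconst + 1) * 4) * (1/(M:ℝ)) := by
          rw [one_div]
          have hKS : K * Sconst ≤ (|K| + 1) * (Sconst + 1) * 4 := by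
            nlinarith [le_abs_self K, abs_nonneg K, hSpos.le]
          calc K * (M:ℝ)⁻¹ * Sconst = (K * Sconst) * (M:ℝ)⁻¹ := by ring
            _ ≤ ((|K| + 1) * (Sconst + 1) * 4) * (M:ℝ)⁻¹ :=
                mul_le_mul_of_nonneg_right hKS (by positivity)
      _ ≤ ((|K| + 1) * (Sconst + 1) * 4) * (1/(M:ℝ) + 1/(M:ℝ)^(κ-1)) := by
          refine mul_le_mul_of_nonneg_left ?_ hKpos.le
          linarith
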